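/- Let A ≀ B = (⊕_B A) ⋊ B be a restricted wreath product with A nontrivial and B infinite. Then A ≀ B contains no nontrivial finite normal subgroup. -/

import Mathlib

/-- The subgroup of `B → A` consisting of finitely supported functions. -/
def FinMulSupp (A B : Type*) [Group A] : Subgroup (B → A) where
  carrier := {f | (Function.mulSupport f).Finite}
  one_mem' := by simp [Function.mulSupport_one]
  mul_mem' := fun {f g} hf hg =>
    Set.Finite.subset (hf.union hg) (Function.mulSupport_mul f g)
  inv_mem' := fun {f} hf => by simpa [Function.mulSupport_inv] using hf

/-- The shift action of `B` on finitely supported functions `B → A`, by permuting the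
coordinates according to left multiplication. -/
def shiftHom (A B : Type*) [Group A] [Group B] : B →* MulAut ↥(FinMulSupp A B) where
  toFun b :=
    { toFun := fun f => ⟨fun x => f.1 (b⁻¹ * x), by
        refine (f.2.image (fun y => b * y)).subset ?_
        intro x hx
        exact ⟨b⁻¹ * x, hx, by simp⟩⟩
      invFun := fun f => ⟨fun x => f.1 (b * x), by
        refine (f.2.image (fun y => b⁻¹ * y)).subset ?_
        intro x hx
        exact ⟨b * x, hx, by simp⟩⟩
      left_inv := fun f => Subtype.ext (funext fun x => by
        simp [inv_mul_cancel_left])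
      right_inv := fun f => Subtype.ext (funext fun x => by
        simp [mul_inv_cancel_left])
      map_mul' := fun f g => Subtype.ext rfl }
  map_one' := by
    refine MulEquiv.ext fun f => Subtype.ext (funext fun x => ?_)
    simp
  map_mul' := fun b₁ b₂ => by
    refine MulEquiv.ext fun f => Subtype.ext (funext fun x => ?_)
    simp [mul_assoc]

/-- The restricted wreath product `A ≀ B := (⊕_B A) ⋊ B`. -/
abbrev Wreath (A B : Type*) [Group A] [Group B] :=
  FinMulSupp A B ⋊[shiftHom A B] B

/-- If `A` is nontrivial and `B` infinite, then the restricted wreath product `A ≀ B`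
has no nontrivial finite normal subgroup. -/
theorem wreath_no_finite_normal_subgroup
    (A B : Type*) [Group A] [Group B] [Nontrivial A] [Infinite B]
    (N : Subgroup (Wreath A B)) (hN : N.Normal)
    (hfin : (N : Set (Wreath A B)).Finite) :
    N = ⊥ := by
  classical
  -- key claim 1: every element of N has trivial left component
  have hS : (⋃ n ∈ N, Function.mulSupport ((n.left : B → A))).Finite :=
    hfin.biUnion (fun n _ => n.left.2)
  have claim1 : ∀ n ∈ N, ∀ x : B, (n.left : B → A) x = 1 := by
    intro n hn x
    by_contra hx
    have hinj : Function.Injective (fun c : B => c * x) := fun a b h => by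
      simpa using mul_right_cancel h
    have hsub : Set.range (fun c : B => c * x) ⊆
        ⋃ n ∈ N, Function.mulSupport ((n.left : B → A)) := by
      rintro _ ⟨c, rfl⟩
      have hm : SemidirectProduct.inr c * n * (SemidirectProduct.inr c)⁻¹ ∈ N :=
        hN.conj_mem n hn _
      refine Set.mem_biUnion hm ?_
      have key : ((SemidirectProduct.inr c * n * (SemidirectProduct.inr c)⁻¹).left : B → A)
          (c * x) = (n.left : B → A) x := by
        simp only [SemidirectProduct.mul_left, SemidirectProduct.inv_left, SemidirectProduct.left_inr, SemidirectProduct.right_inr, SemidirectProduct.mul_right]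
        simp [SemidirectProduct.mul_left, SemidirectProduct.inv_left, shiftHom]
      rw [Function.mem_mulSupport]
      show ((SemidirectProduct.inr c * n * (SemidirectProduct.inr c)⁻¹).left : B → A)
        (c * x) ≠ 1
      rw [key]; exact hx
    exact ((Set.infinite_range_of_injective hinj).mono hsub) hS
  -- key claim 2: every element of N has trivial right component
  have claim2 : ∀ n ∈ N, n.right = 1 := by
    intro n hn
    obtain ⟨a, ha⟩ := exists_ne (1 : A)
    set g : ↥(FinMulSupp A B) :=
      ⟨fun y => if y = (1 : B) then a else 1, by
        apply Set.Finite.subset (Set.finite_singleton (1 : B))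
        intro y hy
        by_contra h
        exact hy (if_neg h)⟩ with hg
    have hm : SemidirectProduct.inl g * n * (SemidirectProduct.inl g)⁻¹ ∈ N :=
      hN.conj_mem n hn _
    have hnl : n.left = 1 := Subtype.ext (funext fun x => claim1 n hn x)
    have h1 := claim1 _ hm (1 : B)
    have hval : ((SemidirectProduct.inl g * n * (SemidirectProduct.inl g)⁻¹).left : B → A)
        (1 : B) = a * ((if n.right⁻¹ * 1 = (1 : B) then a else 1))⁻¹ := by
      simp only [SemidirectProduct.mul_left, SemidirectProduct.inv_left, SemidirectProduct.left_inl, SemidirectProduct.right_inl, SemidirectProduct.mul_right]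
      simp [SemidirectProduct.mul_left, SemidirectProduct.inv_left, hnl, shiftHom, hg]
    rw [hval] at h1
    by_contra hb
    rw [if_neg (by simpa using fun h => hb (by simpa using congrArg Inv.inv h))] at h1
    simp at h1
    exact ha h1
  rw [Subgroup.eq_bot_iff_forall]
  intro n hn
  have h1 : n.left = 1 := Subtype.ext (funext fun x => claim1 n hn x)
  have h2 : n.right = 1 := claim2 n hn
  exact SemidirectProduct.ext h1 h2
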